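/- Let p : {0,1}^n → ℝ be written as a linear combination of Boolean terms, p = Σ_C α_C·C, where every term C appearing with α_C ≠ 0 has width |C| ≤ d, and suppose d ≤ M/2. Then E_{X∼U}[p(X)] − E_{Z∼D}[p(Z)] ≤ (2d/M)·Σ_C |α_C|·2^{−|C|}, and likewise |E_U[p] − E_D[p]| ≤ (2d/M)·Σ_C |α_C|·2^{−|C|}. -/

import Mathlib

namespace GLN

noncomputable section

open Finset

/-- `M = 2^m`. -/
def MM (m : ℕ) : ℕ := 2 ^ m

/-- `N = ⌈M · m · ln 2⌉`. -/
def NN (m : ℕ) : ℕ := ⌈(MM m : ℝ) * m * Real.log 2⌉₊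

/-- Strings `X ∈ [M]^N`. -/
abbrev Str (m : ℕ) := Fin (NN m) → Fin (MM m)

/-- The uniform probability mass function on `[M]^N`. -/
def umass (m : ℕ) (_X : Str m) : ℝ := 1 / (MM m : ℝ) ^ NN m

/-- The image `Im(X) ⊆ [M]` of a string, as a finset. -/
def img {m : ℕ} (X : Str m) : Finset (Fin (MM m)) := Finset.image X Finset.univ

/-- Transition kernel of `D_y(X)`: each coordinate with `x_i = y` is replaced by a uniform
independent sample from `[M] \ {y}`; other coordinates are unchanged. -/
def kerDy (m : ℕ) (y : Fin (MM m)) (X Z : Str m) : ℝ :=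
  ∏ i, if X i = y then (if Z i = y then 0 else 1 / ((MM m : ℝ) - 1))
       else (if Z i = X i then 1 else 0)

/-- Transition kernel of `D(X)`: choose `y` uniformly in `[M]`, then apply `D_y`. -/
def kerD (m : ℕ) (X Z : Str m) : ℝ := (1 / (MM m : ℝ)) * ∑ y, kerDy m y X Z

/-- The probability mass function of the distribution `D = D(U)`. -/
def dmass (m : ℕ) (Z : Str m) : ℝ := ∑ X, umass m X * kerD m X Z

/-- Transition kernel of `D_y^inv(Z)`: each coordinate is independently replaced by `y`
with probability `1/M` and left unchanged otherwise. -/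
def kerDinvy (m : ℕ) (y : Fin (MM m)) (Z W : Str m) : ℝ :=
  ∏ i, ((1 / (MM m : ℝ)) * (if W i = y then 1 else 0)
        + (1 - 1 / (MM m : ℝ)) * (if W i = Z i then 1 else 0))

/-- Transition kernel of `D^inv(Z)`: choose `y` uniformly in `[M] \ Im(Z)`,
then apply `D_y^inv`. -/
def kerDinv (m : ℕ) (Z W : Str m) : ℝ :=
  (1 / (((img Z)ᶜ.card : ℝ))) * ∑ y ∈ (img Z)ᶜ, kerDinvy m y Z W

/-- Probability of an event under a mass function. -/
def pr {m : ℕ} (μ : Str m → ℝ) (E : Set (Str m)) : ℝ := ∑ X, E.indicator μ X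

/-- Expectation of a real function under a mass function. -/
def ev {m : ℕ} (μ : Str m → ℝ) (g : Str m → ℝ) : ℝ := ∑ X, μ X * g X

/-- The surjectivity function `f_Surj`. -/
def fSurjB (m : ℕ) (X : Str m) : Bool := decide (img X = Finset.univ)

/-- The `q.2`-th bit of the binary encoding of coordinate `x_{q.1}` of `X`;
this realizes `X` as a string of `n = N·m` bits. -/
def bit {m : ℕ} (X : Str m) (q : Fin (NN m) × Fin m) : Bool :=
  Nat.testBit (X q.1).val q.2.val


/-! ### Auxiliary material for the proof of `stmt16` -/

section Aux

variable {ι : Type*}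

/-- Weierstrass-type product lower bound. -/
lemma prod_sub_ge [DecidableEq ι] (S : Finset ι) (c b : ι → ℝ)
    (hb : ∀ i ∈ S, 0 ≤ b i) (hbc : ∀ i ∈ S, b i ≤ c i) :
    ∏ i ∈ S, c i - ∑ j ∈ S, b j * ∏ l ∈ S.erase j, c l ≤ ∏ i ∈ S, (c i - b i) := by
  classical
  revert hb hbc
  refine Finset.induction_on S ?_ ?_
  · intro _ _; simp
  · intro j T hj ih hb hbc
    have hb' : ∀ i ∈ T, 0 ≤ b i := fun i hi => hb i (Finset.mem_insert_of_mem hi)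
    have hbc' : ∀ i ∈ T, b i ≤ c i := fun i hi => hbc i (Finset.mem_insert_of_mem hi)
    have hc' : ∀ i ∈ T, 0 ≤ c i := fun i hi => (hb' i hi).trans (hbc' i hi)
    have hbj : 0 ≤ b j := hb j (Finset.mem_insert_self j T)
    have hbcj : b j ≤ c j := hbc j (Finset.mem_insert_self j T)
    have hQ : (0:ℝ) ≤ ∑ l ∈ T, b l * ∏ x ∈ T.erase l, c x :=
      Finset.sum_nonneg fun l hl => mul_nonneg (hb' l hl)
        (Finset.prod_nonneg fun x hx => hc' x (Finset.mem_of_mem_erase hx))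
    rw [Finset.prod_insert hj, Finset.prod_insert hj, Finset.sum_insert hj,
        Finset.erase_insert hj]
    have hsum : ∑ l ∈ T, b l * ∏ x ∈ (insert j T).erase l, c x
        = ∑ l ∈ T, b l * (c j * ∏ x ∈ T.erase l, c x) := by
      refine Finset.sum_congr rfl fun l hl => ?_
      have hne : j ≠ l := fun h => hj (h ▸ hl)
      rw [Finset.erase_insert_of_ne hne,
        Finset.prod_insert (fun hmem => hj (Finset.mem_of_mem_erase hmem))]
    rw [hsum]
    have hSig : ∑ l ∈ T, b l * (c j * ∏ x ∈ T.erase l, c x)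
        = c j * ∑ l ∈ T, b l * ∏ x ∈ T.erase l, c x := by
      rw [Finset.mul_sum]
      exact Finset.sum_congr rfl fun l _ => by ring
    rw [hSig]
    have ih' := ih hb' hbc'
    have hstep := mul_le_mul_of_nonneg_left ih' (sub_nonneg.2 hbcj)
    nlinarith [mul_nonneg hbj hQ]

/-- `M^s (M - s) ≤ (M-1)^s M` for `s ≤ M`. -/
lemma pow_fact (Mr : ℝ) (hM : 1 ≤ Mr) :
    ∀ s : ℕ, (s : ℝ) ≤ Mr → Mr ^ s * (Mr - s) ≤ (Mr - 1) ^ s * Mr := by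
  intro s
  induction s with
  | zero => intro _; simp
  | succ n ih =>
    intro hs
    have hn : (n : ℝ) ≤ Mr := by push_cast at hs ⊢; linarith
    have h1 := ih hn
    have h2 : (0:ℝ) ≤ Mr ^ n := by positivity
    have h3 : (0:ℝ) ≤ Mr - 1 := by linarith
    have hn0 : (0:ℝ) ≤ (n : ℝ) := Nat.cast_nonneg n
    have key : Mr ^ n * (Mr * (Mr - ((n:ℝ)+1))) ≤ Mr ^ n * ((Mr - n) * (Mr - 1)) := by
      apply mul_le_mul_of_nonneg_left _ h2
      nlinarith
    calc Mr ^ (n+1) * (Mr - ((n:ℕ)+1:ℕ)) = Mr ^ n * (Mr * (Mr - ((n:ℝ)+1))) := by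
          push_cast; ring
      _ ≤ Mr ^ n * ((Mr - n) * (Mr - 1)) := key
      _ = (Mr ^ n * (Mr - n)) * (Mr - 1) := by ring
      _ ≤ ((Mr - 1) ^ n * Mr) * (Mr - 1) := mul_le_mul_of_nonneg_right h1 h3
      _ = (Mr - 1) ^ (n+1) * Mr := by ring

lemma div_le_div_same' {a b c : ℝ} (h : a ≤ b) (hc : 0 < c) : a / c ≤ b / c := by
  rw [div_eq_mul_inv, div_eq_mul_inv]
  exact mul_le_mul_of_nonneg_right h (inv_nonneg.2 hc.le)

lemma div_le_div_left' {a b c : ℝ} (ha : 0 ≤ a) (hb : 0 < b) (h : b ≤ c) : a / c ≤ a / b := by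
  rw [div_eq_mul_inv, div_eq_mul_inv]
  exact mul_le_mul_of_nonneg_left (inv_anti₀ hb h) ha

end Aux

lemma two_le_MM (m : ℕ) (hm : 1 ≤ m) : 2 ≤ MM m := by
  have h := Nat.pow_le_pow_right (by norm_num : 0 < 2) hm
  simpa [MM] using h

/-- Sum over function space of a product equals product of sums. -/
lemma sum_prod_fn (m : ℕ) (f : Fin (NN m) → Fin (MM m) → ℝ) :
    ∑ Z : Str m, ∏ i, f i (Z i) = ∏ i, ∑ z, f i z := by
  classical
  rw [Finset.prod_univ_sum, Fintype.piFinset_univ]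

/-- The single-coordinate factor of a term. -/
def hfun (m : ℕ) (V : Finset (Fin (NN m) × Fin m)) (a : Fin (NN m) × Fin m → Bool)
    (i : Fin (NN m)) (z : Fin (MM m)) : ℝ :=
  if ∀ b : Fin m, (i, b) ∈ V → Nat.testBit z.val b.val = a (i, b) then 1 else 0

/-- Number (as a real) of values matching the pattern at coordinate `i`. -/
def cntf (m : ℕ) (V : Finset (Fin (NN m) × Fin m)) (a : Fin (NN m) × Fin m → Bool)
    (i : Fin (NN m)) : ℝ := ∑ z, hfun m V a i z

/-- Single-coordinate law of `Z` given `y`. -/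
def gfun (m : ℕ) (y z : Fin (MM m)) : ℝ := if z = y then 0 else 1 / ((MM m : ℝ) - 1)

lemma hCfac (m : ℕ) (V : Finset (Fin (NN m) × Fin m)) (a : Fin (NN m) × Fin m → Bool)
    (Z : Str m) :
    (if ∀ q ∈ V, bit Z q = a q then (1:ℝ) else 0) = ∏ i, hfun m V a i (Z i) := by
  classical
  unfold hfun
  rw [Finset.prod_boole]
  have hiff : (∀ q ∈ V, bit Z q = a q) ↔ ∀ i ∈ (Finset.univ : Finset (Fin (NN m))),
      ∀ b : Fin m, (i, b) ∈ V → Nat.testBit (Z i).val b.val = a (i, b) := by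
    constructor
    · intro H i _ b hb; exact H (i, b) hb
    · intro H q hq
      obtain ⟨i, b⟩ := q
      exact H i (Finset.mem_univ i) b hq
  by_cases H : ∀ q ∈ V, bit Z q = a q
  · rw [if_pos H, if_pos (hiff.1 H)]
  · rw [if_neg H, if_neg (fun H' => H (hiff.2 H'))]

lemma evu (m : ℕ) (V : Finset (Fin (NN m) × Fin m)) (a : Fin (NN m) × Fin m → Bool) :
    ev (umass m) (fun X => if ∀ q ∈ V, bit X q = a q then (1:ℝ) else 0)
      = ∏ i, cntf m V a i / (MM m : ℝ) := by
  classical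
  unfold ev umass
  have h1 : ∀ Z : Str m, (1 / (MM m:ℝ) ^ NN m) * (if ∀ q ∈ V, bit Z q = a q then (1:ℝ) else 0)
      = ∏ i, (1/(MM m:ℝ)) * hfun m V a i (Z i) := by
    intro Z
    rw [hCfac m V a Z, Finset.prod_mul_distrib, Finset.prod_const, Finset.card_univ,
      Fintype.card_fin, div_pow, one_pow]
  rw [Finset.sum_congr rfl fun Z _ => h1 Z,
    sum_prod_fn m (fun i z => 1/(MM m:ℝ) * hfun m V a i z)]
  refine Finset.prod_congr rfl fun i _ => ?_
  rw [← Finset.mul_sum]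
  unfold cntf
  ring

lemma dmass_eq (m : ℕ) (hm : 1 ≤ m) (Z : Str m) :
    dmass m Z = (1/(MM m:ℝ)) * ∑ y, ∏ i, gfun m y (Z i) := by
  classical
  have hM2 : (2:ℝ) ≤ (MM m:ℝ) := by exact_mod_cast two_le_MM m hm
  have hM0 : (MM m:ℝ) ≠ 0 := by linarith
  have hM1 : (MM m:ℝ) - 1 ≠ 0 := by intro h; nlinarith
  unfold dmass umass kerD kerDy
  have h1 : ∀ X : Str m,
      (1 / (MM m:ℝ) ^ NN m) * ((1 / (MM m:ℝ)) * ∑ y, ∏ i,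
        if X i = y then (if Z i = y then (0:ℝ) else 1 / ((MM m:ℝ) - 1))
        else (if Z i = X i then 1 else 0))
      = (1/(MM m:ℝ)) * ∑ y, ∏ i, (1/(MM m:ℝ)) *
          (if X i = y then (if Z i = y then (0:ℝ) else 1/((MM m:ℝ)-1))
           else (if Z i = X i then 1 else 0)) := by
    intro X
    rw [mul_left_comm]
    congr 1
    rw [Finset.mul_sum]
    refine Finset.sum_congr rfl fun y _ => ?_
    rw [Finset.prod_mul_distrib, Finset.prod_const, Finset.card_univ, Fintype.card_fin,
      div_pow, one_pow]
  rw [Finset.sum_congr rfl fun X _ => h1 X, ← Finset.mul_sum, Finset.sum_comm]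
  congr 1
  refine Finset.sum_congr rfl fun y _ => ?_
  rw [sum_prod_fn m (fun i x => (1/(MM m:ℝ)) *
      (if x = y then (if Z i = y then (0:ℝ) else 1/((MM m:ℝ)-1))
       else (if Z i = x then 1 else 0)))]
  refine Finset.prod_congr rfl fun i _ => ?_
  rw [← Finset.mul_sum]
  have hsum : (∑ x : Fin (MM m), if x = y then (if Z i = y then (0:ℝ) else 1/((MM m:ℝ)-1))
        else (if Z i = x then 1 else 0))
      = (if Z i = y then (0:ℝ) else 1/((MM m:ℝ)-1)) + (if Z i = y then 0 else 1) := by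
    rw [← Finset.add_sum_erase _ _ (Finset.mem_univ y)]
    congr 1
    · rw [if_pos rfl]
    · rw [Finset.sum_congr rfl (fun x hx => if_neg (Finset.ne_of_mem_erase hx)),
        Finset.sum_ite_eq (Finset.univ.erase y) (Z i) (fun _ => (1:ℝ))]
      by_cases hzy : Z i = y
      · simp [hzy]
      · simp [Finset.mem_erase, hzy]
  rw [hsum]
  unfold gfun
  by_cases hzy : Z i = y
  · simp only [if_pos hzy]; ring
  · simp only [if_neg hzy]
    field_simp
    ring

lemma evd (m : ℕ) (hm : 1 ≤ m) (V : Finset (Fin (NN m) × Fin m))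
    (a : Fin (NN m) × Fin m → Bool) :
    ev (dmass m) (fun X => if ∀ q ∈ V, bit X q = a q then (1:ℝ) else 0)
      = (1/(MM m:ℝ)) * ∑ y, ∏ i, (cntf m V a i - hfun m V a i y) / ((MM m:ℝ) - 1) := by
  classical
  unfold ev
  have h1 : ∀ Z : Str m, dmass m Z * (if ∀ q ∈ V, bit Z q = a q then (1:ℝ) else 0)
      = (1/(MM m:ℝ)) * ∑ y, ∏ i, gfun m y (Z i) * hfun m V a i (Z i) := by
    intro Z
    rw [dmass_eq m hm Z, hCfac m V a Z, mul_assoc, Finset.sum_mul]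
    congr 1
    refine Finset.sum_congr rfl fun y _ => ?_
    rw [← Finset.prod_mul_distrib]
  rw [Finset.sum_congr rfl fun Z _ => h1 Z, ← Finset.mul_sum, Finset.sum_comm]
  congr 1
  refine Finset.sum_congr rfl fun y _ => ?_
  rw [sum_prod_fn m (fun i z => gfun m y z * hfun m V a i z)]
  refine Finset.prod_congr rfl fun i _ => ?_
  have h2 : ∀ z, gfun m y z * hfun m V a i z
      = (1/((MM m:ℝ)-1)) * hfun m V a i z
        - (if z = y then (1/((MM m:ℝ)-1)) * hfun m V a i y else 0) := by
    intro z
    unfold gfun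
    by_cases hzy : z = y
    · subst hzy; rw [if_pos rfl, if_pos rfl]; ring
    · rw [if_neg hzy, if_neg hzy]; ring
  rw [Finset.sum_congr rfl fun z _ => h2 z, Finset.sum_sub_distrib, ← Finset.mul_sum,
    Finset.sum_ite_eq' Finset.univ y (fun _ => (1/((MM m:ℝ)-1)) * hfun m V a i y),
    if_pos (Finset.mem_univ y)]
  unfold cntf
  ring

lemma cnt_le (m : ℕ) (V : Finset (Fin (NN m) × Fin m)) (a : Fin (NN m) × Fin m → Bool)
    (i : Fin (NN m)) :
    cntf m V a i ≤ (MM m : ℝ) * (2:ℝ)⁻¹ ^ (V.filter fun q => q.1 = i).card := by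
  classical
  set k := (V.filter fun q => q.1 = i).card with hk
  set Si : Finset (Fin m) := (V.filter fun q => q.1 = i).image Prod.snd with hSi
  have hinj : Set.InjOn Prod.snd (↑(V.filter fun q => q.1 = i) : Set (Fin (NN m) × Fin m)) := by
    intro q hq q' hq' hss
    simp only [Finset.coe_filter, Set.mem_setOf_eq] at hq hq'
    exact Prod.ext (hq.2.trans hq'.2.symm) hss
  have hSicard : Si.card = k := by rw [hSi, hk, Finset.card_image_of_injOn hinj]
  have hkm : k ≤ m := by
    rw [← hSicard]
    simpa using Finset.card_le_univ Si
  have hcnt : cntf m V a i = (((Finset.univ : Finset (Fin (MM m))).filter fun z =>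
      ∀ b : Fin m, (i, b) ∈ V → Nat.testBit z.val b.val = a (i, b)).card : ℝ) := by
    unfold cntf hfun
    rw [Finset.sum_boole]
  have hcard : ((Finset.univ : Finset (Fin (MM m))).filter fun z =>
      ∀ b : Fin m, (i, b) ∈ V → Nat.testBit z.val b.val = a (i, b)).card ≤ 2 ^ (m - k) := by
    have hle := Finset.card_le_card_of_injOn
      (s := (Finset.univ : Finset (Fin (MM m))).filter fun z =>
        ∀ b : Fin m, (i, b) ∈ V → Nat.testBit z.val b.val = a (i, b))
      (f := fun (z : Fin (MM m)) (b : {x : Fin m // x ∈ Siᶜ}) => Nat.testBit z.val b.1.val)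
      (t := (Finset.univ : Finset ({x : Fin m // x ∈ Siᶜ} → Bool)))
      (fun z _ => Finset.mem_univ _) ?_
    · refine hle.trans ?_
      rw [Finset.card_univ, Fintype.card_fun, Fintype.card_coe, Finset.card_compl,
        Fintype.card_fin, hSicard]
      simp
    · intro z₁ hz₁ z₂ hz₂ hφ
      simp only [Finset.coe_filter, Set.mem_setOf_eq, Finset.mem_univ, true_and] at hz₁ hz₂
      apply Fin.ext
      apply Nat.eq_of_testBit_eq
      intro j
      by_cases hj : j < m
      · by_cases hbSi : (⟨j, hj⟩ : Fin m) ∈ Si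
        · rw [hSi] at hbSi
          obtain ⟨q, hq, hq2⟩ := Finset.mem_image.1 hbSi
          obtain ⟨hqV, hq1⟩ := Finset.mem_filter.1 hq
          have hib : (i, (⟨j, hj⟩ : Fin m)) ∈ V := by
            have hqe : q = (i, (⟨j, hj⟩ : Fin m)) := Prod.ext hq1 hq2
            rwa [hqe] at hqV
          have e1 : Nat.testBit z₁.val j = a (i, (⟨j, hj⟩ : Fin m)) := hz₁ ⟨j, hj⟩ hib
          have e2 : Nat.testBit z₂.val j = a (i, (⟨j, hj⟩ : Fin m)) := hz₂ ⟨j, hj⟩ hib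
          rw [e1, e2]
        · have hmem : (⟨j, hj⟩ : Fin m) ∈ Siᶜ := Finset.mem_compl.2 hbSi
          exact congrFun hφ ⟨⟨j, hj⟩, hmem⟩
      · have hz1m : z₁.val < 2 ^ m := by simpa [MM] using z₁.isLt
        have hz2m : z₂.val < 2 ^ m := by simpa [MM] using z₂.isLt
        have hpow : (2:ℕ) ^ m ≤ 2 ^ j :=
          Nat.pow_le_pow_right (by norm_num) (le_of_not_gt hj)
        rw [Nat.testBit_lt_two_pow (lt_of_lt_of_le hz1m hpow),
          Nat.testBit_lt_two_pow (lt_of_lt_of_le hz2m hpow)]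
  have h2 : ((2:ℝ)) ^ (m - k) * 2 ^ k = 2 ^ m := by
    rw [← pow_add, Nat.sub_add_cancel hkm]
  have hMM : (MM m : ℝ) = 2 ^ m := by
    simp [MM]
  have heq : ((2 ^ (m - k) : ℕ) : ℝ) = (MM m : ℝ) * (2:ℝ)⁻¹ ^ k := by
    push_cast
    rw [hMM, inv_pow, ← div_eq_mul_inv, eq_div_iff (by positivity)]
    exact h2
  calc cntf m V a i = _ := hcnt
    _ ≤ ((2 ^ (m - k) : ℕ) : ℝ) := by exact_mod_cast hcard
    _ = (MM m : ℝ) * (2:ℝ)⁻¹ ^ k := heq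

lemma term_bound (m d : ℕ) (hm : 1 ≤ m) (hd : 2 * d ≤ MM m)
    (V : Finset (Fin (NN m) × Fin m)) (a : Fin (NN m) × Fin m → Bool) (hw : V.card ≤ d) :
    |ev (umass m) (fun X => if ∀ q ∈ V, bit X q = a q then (1:ℝ) else 0) -
        ev (dmass m) (fun X => if ∀ q ∈ V, bit X q = a q then (1:ℝ) else 0)| ≤
      2 * (d : ℝ) / (MM m : ℝ) * (2:ℝ)⁻¹ ^ V.card := by
  classical
  have hM2 : (2:ℝ) ≤ (MM m:ℝ) := by exact_mod_cast two_le_MM m hm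
  have hMpos : (0:ℝ) < (MM m:ℝ) := by linarith
  have hM1pos : (0:ℝ) < (MM m:ℝ) - 1 := by linarith
  have h2d : 2*(d:ℝ) ≤ (MM m:ℝ) := by exact_mod_cast hd
  have hd0 : (0:ℝ) ≤ (d:ℝ) := Nat.cast_nonneg d
  set S := V.image Prod.fst with hS
  have hsd : S.card ≤ d := le_trans Finset.card_image_le hw
  have hcast_sd : (S.card:ℝ) ≤ (d:ℝ) := by exact_mod_cast hsd
  have hMs : (MM m:ℝ)/2 ≤ (MM m:ℝ) - S.card := by linarith
  have hMspos : (0:ℝ) < (MM m:ℝ) - S.card := by linarith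
  have hh01 : ∀ i z, 0 ≤ hfun m V a i z ∧ hfun m V a i z ≤ 1 := by
    intro i z; unfold hfun; split_ifs <;> norm_num
  have hcnt0 : ∀ i, 0 ≤ cntf m V a i :=
    fun i => Finset.sum_nonneg fun z _ => (hh01 i z).1
  have hhc : ∀ i y, hfun m V a i y ≤ cntf m V a i := fun i y =>
    Finset.single_le_sum (fun z _ => (hh01 i z).1) (Finset.mem_univ y)
  have hoff : ∀ i, i ∉ S → ∀ z : Fin (MM m), hfun m V a i z = 1 := by
    intro i hi z
    rw [hS] at hi
    unfold hfun
    rw [if_pos]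
    intro b hb
    exact absurd (Finset.mem_image_of_mem Prod.fst hb) hi
  have hcntoff : ∀ i, i ∉ S → cntf m V a i = (MM m:ℝ) := by
    intro i hi
    unfold cntf
    rw [Finset.sum_congr rfl fun z _ => hoff i hi z, Finset.sum_const, Finset.card_univ,
      Fintype.card_fin, nsmul_eq_mul, mul_one]
  have hEU : ev (umass m) (fun X => if ∀ q ∈ V, bit X q = a q then (1:ℝ) else 0)
      = (∏ i ∈ S, cntf m V a i) / (MM m:ℝ) ^ S.card := by
    rw [evu m V a,
      show (∏ i, cntf m V a i / (MM m:ℝ)) = ∏ i ∈ S, cntf m V a i / (MM m:ℝ) from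
        (Finset.prod_subset (Finset.subset_univ S) (fun i _ hi => by
          rw [hcntoff i hi, div_self (ne_of_gt hMpos)])).symm,
      Finset.prod_div_distrib, Finset.prod_const]
  have hED : ev (dmass m) (fun X => if ∀ q ∈ V, bit X q = a q then (1:ℝ) else 0)
      = (1/(MM m:ℝ)) * ∑ y : Fin (MM m),
          (∏ i ∈ S, (cntf m V a i - hfun m V a i y)) / ((MM m:ℝ)-1) ^ S.card := by
    rw [evd m hm V a]
    congr 1
    refine Finset.sum_congr rfl fun y _ => ?_
    rw [show (∏ i, (cntf m V a i - hfun m V a i y)/((MM m:ℝ)-1))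
          = ∏ i ∈ S, (cntf m V a i - hfun m V a i y)/((MM m:ℝ)-1) from
        (Finset.prod_subset (Finset.subset_univ S) (fun i _ hi => by
          rw [hcntoff i hi, hoff i hi y]
          exact div_self (ne_of_gt hM1pos))).symm,
      Finset.prod_div_distrib, Finset.prod_const]
  have hP0 : 0 ≤ ∏ i ∈ S, cntf m V a i := Finset.prod_nonneg fun i _ => hcnt0 i
  have hpowA : (0:ℝ) < ((MM m:ℝ)-1) ^ S.card := pow_pos hM1pos _
  have hpowB : (0:ℝ) < (MM m:ℝ) ^ S.card := pow_pos hMpos _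
  have hABle : ((MM m:ℝ)-1) ^ S.card ≤ (MM m:ℝ) ^ S.card :=
    pow_le_pow_left₀ (by linarith) (by linarith) _
  have hABkey : (MM m:ℝ) ^ S.card * ((MM m:ℝ) - S.card) ≤ ((MM m:ℝ)-1) ^ S.card * (MM m:ℝ) :=
    pow_fact (MM m:ℝ) (by linarith) S.card (by linarith)
  have hfib : ∑ i ∈ S, (V.filter fun q => q.1 = i).card = V.card := by
    rw [hS]
    exact (Finset.card_eq_sum_card_fiberwise
      (fun q hq => Finset.mem_image_of_mem Prod.fst hq)).symm
  have hPle : (∏ i ∈ S, cntf m V a i) / (MM m:ℝ) ^ S.card ≤ (2:ℝ)⁻¹ ^ V.card := by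
    rw [div_le_iff₀ hpowB]
    calc ∏ i ∈ S, cntf m V a i
        ≤ ∏ i ∈ S, ((MM m:ℝ) * (2:ℝ)⁻¹ ^ (V.filter fun q => q.1 = i).card) :=
          Finset.prod_le_prod (fun i _ => hcnt0 i) (fun i _ => cnt_le m V a i)
      _ = (2:ℝ)⁻¹ ^ V.card * (MM m:ℝ) ^ S.card := by
          rw [Finset.prod_mul_distrib, Finset.prod_const, Finset.prod_pow_eq_pow_sum, hfib]
          ring
  have hQ0 : 0 ≤ (∏ i ∈ S, cntf m V a i) / (MM m:ℝ) ^ S.card := div_nonneg hP0 hpowB.le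
  have hEDub : ev (dmass m) (fun X => if ∀ q ∈ V, bit X q = a q then (1:ℝ) else 0)
      ≤ (∏ i ∈ S, cntf m V a i)/((MM m:ℝ)-1) ^ S.card := by
    rw [hED]
    have hterm : ∀ y : Fin (MM m),
        (∏ i ∈ S, (cntf m V a i - hfun m V a i y))/((MM m:ℝ)-1) ^ S.card
          ≤ (∏ i ∈ S, cntf m V a i)/((MM m:ℝ)-1) ^ S.card := fun y =>
      div_le_div_same' (Finset.prod_le_prod (fun i _ => sub_nonneg.2 (hhc i y))
        (fun i _ => by linarith [(hh01 i y).1])) hpowA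
    calc (1/(MM m:ℝ)) * ∑ y : Fin (MM m),
          (∏ i ∈ S, (cntf m V a i - hfun m V a i y))/((MM m:ℝ)-1) ^ S.card
        ≤ (1/(MM m:ℝ)) * ∑ _y : Fin (MM m),
            (∏ i ∈ S, cntf m V a i)/((MM m:ℝ)-1) ^ S.card :=
          mul_le_mul_of_nonneg_left (Finset.sum_le_sum fun y _ => hterm y) (by positivity)
      _ = (∏ i ∈ S, cntf m V a i)/((MM m:ℝ)-1) ^ S.card := by
          rw [Finset.sum_const, Finset.card_univ, Fintype.card_fin, nsmul_eq_mul,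
            ← mul_assoc, one_div, inv_mul_cancel₀ (ne_of_gt hMpos), one_mul]
  have hEDlb : (∏ i ∈ S, cntf m V a i) * (1 - (S.card:ℝ)/(MM m:ℝ)) / ((MM m:ℝ)-1) ^ S.card
      ≤ ev (dmass m) (fun X => if ∀ q ∈ V, bit X q = a q then (1:ℝ) else 0) := by
    rw [hED]
    have hterm : ∀ y : Fin (MM m),
        ((∏ i ∈ S, cntf m V a i) - ∑ j ∈ S, hfun m V a j y * ∏ l ∈ S.erase j, cntf m V a l)
            / ((MM m:ℝ)-1) ^ S.card
          ≤ (∏ i ∈ S, (cntf m V a i - hfun m V a i y))/((MM m:ℝ)-1) ^ S.card := fun y =>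
      div_le_div_same' (prod_sub_ge S _ _ (fun j _ => (hh01 j y).1) (fun j _ => hhc j y)) hpowA
    have hsum1 : ∀ j ∈ S, (∑ y : Fin (MM m), hfun m V a j y * ∏ l ∈ S.erase j, cntf m V a l)
        = ∏ i ∈ S, cntf m V a i := by
      intro j hj
      rw [← Finset.sum_mul]
      exact Finset.mul_prod_erase S (cntf m V a) hj
    have hyy : ∑ y : Fin (MM m), ∑ j ∈ S, hfun m V a j y * ∏ l ∈ S.erase j, cntf m V a l
        = (S.card:ℝ) * ∏ i ∈ S, cntf m V a i := by
      rw [Finset.sum_comm, Finset.sum_congr rfl hsum1, Finset.sum_const, nsmul_eq_mul]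
    calc (∏ i ∈ S, cntf m V a i) * (1 - (S.card:ℝ)/(MM m:ℝ)) / ((MM m:ℝ)-1) ^ S.card
        = (1/(MM m:ℝ)) * ∑ y : Fin (MM m),
            ((∏ i ∈ S, cntf m V a i) - ∑ j ∈ S, hfun m V a j y * ∏ l ∈ S.erase j, cntf m V a l)
              / ((MM m:ℝ)-1) ^ S.card := by
          rw [← Finset.sum_div, Finset.sum_sub_distrib, hyy, Finset.sum_const,
            Finset.card_univ, Fintype.card_fin, nsmul_eq_mul]
          field_simp
      _ ≤ (1/(MM m:ℝ)) * ∑ y : Fin (MM m),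
            (∏ i ∈ S, (cntf m V a i - hfun m V a i y))/((MM m:ℝ)-1) ^ S.card :=
          mul_le_mul_of_nonneg_left (Finset.sum_le_sum fun y _ => hterm y) (by positivity)
  have hdiff1 : ev (umass m) (fun X => if ∀ q ∈ V, bit X q = a q then (1:ℝ) else 0)
      - ev (dmass m) (fun X => if ∀ q ∈ V, bit X q = a q then (1:ℝ) else 0)
      ≤ 2*(S.card:ℝ)/(MM m:ℝ) * ((∏ i ∈ S, cntf m V a i)/(MM m:ℝ) ^ S.card) := by
    have hnum0 : 0 ≤ (∏ i ∈ S, cntf m V a i) * (1 - (S.card:ℝ)/(MM m:ℝ)) :=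
      mul_nonneg hP0 (sub_nonneg.2 ((div_le_one hMpos).2 (by linarith)))
    have h1 : (∏ i ∈ S, cntf m V a i) * (1 - (S.card:ℝ)/(MM m:ℝ)) / (MM m:ℝ) ^ S.card
        ≤ (∏ i ∈ S, cntf m V a i) * (1 - (S.card:ℝ)/(MM m:ℝ)) / ((MM m:ℝ)-1) ^ S.card :=
      div_le_div_left' hnum0 hpowA hABle
    have h2 := h1.trans hEDlb
    rw [hEU]
    have heq : (∏ i ∈ S, cntf m V a i)/(MM m:ℝ) ^ S.card
        - (∏ i ∈ S, cntf m V a i) * (1 - (S.card:ℝ)/(MM m:ℝ))/(MM m:ℝ) ^ S.card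
        = (S.card:ℝ)/(MM m:ℝ) * ((∏ i ∈ S, cntf m V a i)/(MM m:ℝ) ^ S.card) := by
      field_simp
      ring
    have h3 : 0 ≤ (S.card:ℝ)/(MM m:ℝ) * ((∏ i ∈ S, cntf m V a i)/(MM m:ℝ) ^ S.card) :=
      mul_nonneg (div_nonneg (Nat.cast_nonneg _) hMpos.le) hQ0
    have h4 : 2*(S.card:ℝ)/(MM m:ℝ) * ((∏ i ∈ S, cntf m V a i)/(MM m:ℝ) ^ S.card)
        = (S.card:ℝ)/(MM m:ℝ) * ((∏ i ∈ S, cntf m V a i)/(MM m:ℝ) ^ S.card)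
          + (S.card:ℝ)/(MM m:ℝ) * ((∏ i ∈ S, cntf m V a i)/(MM m:ℝ) ^ S.card) := by ring
    linarith [h2, heq, h3, h4]
  have hdiff2 : ev (dmass m) (fun X => if ∀ q ∈ V, bit X q = a q then (1:ℝ) else 0)
      - ev (umass m) (fun X => if ∀ q ∈ V, bit X q = a q then (1:ℝ) else 0)
      ≤ 2*(S.card:ℝ)/(MM m:ℝ) * ((∏ i ∈ S, cntf m V a i)/(MM m:ℝ) ^ S.card) := by
    rw [hEU]
    have hB2A : (MM m:ℝ) ^ S.card ≤ 2*((MM m:ℝ)-1) ^ S.card := by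
      nlinarith [mul_le_mul_of_nonneg_left hMs hpowB.le, hABkey, hMpos]
    have hfrac : (∏ i ∈ S, cntf m V a i)/((MM m:ℝ)-1) ^ S.card
          - (∏ i ∈ S, cntf m V a i)/(MM m:ℝ) ^ S.card
        ≤ 2*(S.card:ℝ)/(MM m:ℝ) * ((∏ i ∈ S, cntf m V a i)/(MM m:ℝ) ^ S.card) := by
      rw [div_sub_div _ _ (ne_of_gt hpowA) (ne_of_gt hpowB), div_le_iff₀ (by positivity)]
      have hrw : 2*(S.card:ℝ)/(MM m:ℝ) * ((∏ i ∈ S, cntf m V a i)/(MM m:ℝ) ^ S.card)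
          * (((MM m:ℝ)-1) ^ S.card * (MM m:ℝ) ^ S.card)
          = 2*(S.card:ℝ)*(∏ i ∈ S, cntf m V a i)*((MM m:ℝ)-1) ^ S.card / (MM m:ℝ) := by
        field_simp
      rw [hrw, le_div_iff₀ hMpos]
      nlinarith [mul_le_mul_of_nonneg_left hABkey hP0,
        mul_le_mul_of_nonneg_left hB2A
          (mul_nonneg (Nat.cast_nonneg S.card : (0:ℝ) ≤ (S.card:ℝ)) hP0)]
    linarith [hEDub, hfrac]
  have habs := abs_sub_le_iff.2 ⟨hdiff1, hdiff2⟩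
  calc |ev (umass m) (fun X => if ∀ q ∈ V, bit X q = a q then (1:ℝ) else 0) -
        ev (dmass m) (fun X => if ∀ q ∈ V, bit X q = a q then (1:ℝ) else 0)|
      ≤ 2*(S.card:ℝ)/(MM m:ℝ) * ((∏ i ∈ S, cntf m V a i)/(MM m:ℝ) ^ S.card) := habs
    _ ≤ 2 * (d:ℝ)/(MM m:ℝ) * (2:ℝ)⁻¹ ^ V.card := by
        apply mul_le_mul (div_le_div_same' (by linarith) hMpos) hPle hQ0 (by positivity)

/-- if `p = Σ_C α_C·C` is a linear combination of Boolean terms over the `n = Nm`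
encoding bits, every term with nonzero coefficient having width at most `d ≤ M/2`, then
`E_U[p] − E_D[p] ≤ (2d/M)·Σ_C |α_C|·2^{−|C|}`, and likewise for the absolute value. -/
theorem stmt16 (m d r : ℕ) (hm : 1 ≤ m) (hd : 2 * d ≤ MM m)
    (V : Fin r → Finset (Fin (NN m) × Fin m))
    (a : Fin r → Fin (NN m) × Fin m → Bool)
    (α : Fin r → ℝ) (hwidth : ∀ t, α t ≠ 0 → (V t).card ≤ d)
    (p : Str m → ℝ)
    (hp : ∀ X, p X = ∑ t, α t * (if ∀ q ∈ V t, bit X q = a t q then (1 : ℝ) else 0)) :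
    ev (umass m) p - ev (dmass m) p ≤
      (2 * (d : ℝ) / (MM m : ℝ)) * ∑ t, |α t| * (2 : ℝ)⁻¹ ^ (V t).card ∧
    |ev (umass m) p - ev (dmass m) p| ≤
      (2 * (d : ℝ) / (MM m : ℝ)) * ∑ t, |α t| * (2 : ℝ)⁻¹ ^ (V t).card := by
  classical
  have hpfun : p = fun X => ∑ t, α t * (if ∀ q ∈ V t, bit X q = a t q then (1:ℝ) else 0) :=
    funext hp
  have hlin : ∀ μ : Str m → ℝ,
      ev μ (fun X => ∑ t, α t * (if ∀ q ∈ V t, bit X q = a t q then (1:ℝ) else 0))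
        = ∑ t, α t * ev μ (fun X => if ∀ q ∈ V t, bit X q = a t q then (1:ℝ) else 0) := by
    intro μ
    unfold ev
    simp only [Finset.mul_sum]
    rw [Finset.sum_comm]
    refine Finset.sum_congr rfl fun t _ => Finset.sum_congr rfl fun X _ => by ring
  have hkey : ∀ t : Fin r,
      |α t * (ev (umass m) (fun X => if ∀ q ∈ V t, bit X q = a t q then (1:ℝ) else 0)
        - ev (dmass m) (fun X => if ∀ q ∈ V t, bit X q = a t q then (1:ℝ) else 0))|
      ≤ |α t| * (2 * (d:ℝ)/(MM m:ℝ) * (2:ℝ)⁻¹ ^ (V t).card) := by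
    intro t
    rw [abs_mul]
    rcases eq_or_ne (α t) 0 with h0 | h0
    · simp [h0]
    · exact mul_le_mul_of_nonneg_left
        (term_bound m d hm hd (V t) (a t) (hwidth t h0)) (abs_nonneg _)
  have hmain : |ev (umass m) p - ev (dmass m) p|
      ≤ 2 * (d:ℝ)/(MM m:ℝ) * ∑ t, |α t| * (2:ℝ)⁻¹ ^ (V t).card := by
    rw [hpfun, hlin (umass m), hlin (dmass m), ← Finset.sum_sub_distrib]
    calc |∑ t, (α t * ev (umass m) (fun X => if ∀ q ∈ V t, bit X q = a t q then (1:ℝ) else 0)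
          - α t * ev (dmass m) (fun X => if ∀ q ∈ V t, bit X q = a t q then (1:ℝ) else 0))|
        ≤ ∑ t, |α t * ev (umass m) (fun X => if ∀ q ∈ V t, bit X q = a t q then (1:ℝ) else 0)
            - α t * ev (dmass m) (fun X => if ∀ q ∈ V t, bit X q = a t q then (1:ℝ) else 0)| :=
          Finset.abs_sum_le_sum_abs _ _
      _ ≤ ∑ t, |α t| * (2 * (d:ℝ)/(MM m:ℝ) * (2:ℝ)⁻¹ ^ (V t).card) :=
          Finset.sum_le_sum fun t _ => by rw [← mul_sub]; exact hkey t
      _ = 2 * (d:ℝ)/(MM m:ℝ) * ∑ t, |α t| * (2:ℝ)⁻¹ ^ (V t).card := by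
          rw [Finset.mul_sum]
          exact Finset.sum_congr rfl fun t _ => by ring
  have hmain' : |ev (umass m) p - ev (dmass m) p|
      ≤ (2 * (d:ℝ) / (MM m:ℝ)) * ∑ t, |α t| * (2:ℝ)⁻¹ ^ (V t).card := hmain
  exact ⟨(le_abs_self _).trans hmain', hmain'⟩

end
end GLN
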